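/- arXiv:2404.13735 — 2 statements merged into one kernel-verified Lean document; each statement's English description precedes it below -/
import Mathlib

section
/- Suppose m: ℝ² → ℝ, s: ℝ² → ℝ, r: ℝ² → ℝ, h: ℝ² → ℝ and v: ℝ³ → ℝ are continuously differentiable, v(x, w, d) = m(x, s(r(x, w), d)) for all (x, w, d), and x = h(w, r(x, w)) identically. If ∂s/∂η · ∂r/∂w* ≠ 0 and ∂m/∂ε ≠ 0 at the relevant points, then ∂m/∂x evaluated at (x, s(r(x,w*),δ)) equals ∂v/∂x + (∂v/∂w*) / (∂h/∂w*) where ∂h/∂w* is evaluated at (w*, r(x, w*)) and satisfies ∂h/∂w* = − (∂r/∂w*)/(∂r/∂x). -/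
lemma comp2 (f : ℝ → ℝ → ℝ) (hf : ContDiff ℝ 1 fun p : ℝ × ℝ => f p.1 p.2)
    {g₁ g₂ : ℝ → ℝ} {a g₁' g₂' : ℝ} (h1 : HasDerivAt g₁ g₁' a) (h2 : HasDerivAt g₂ g₂' a) :
    HasDerivAt (fun u => f (g₁ u) (g₂ u))
      ((fderiv ℝ (fun p : ℝ × ℝ => f p.1 p.2) (g₁ a, g₂ a)) (g₁', g₂')) a := by
  have hF : HasFDerivAt (fun p : ℝ × ℝ => f p.1 p.2)
      (fderiv ℝ (fun p : ℝ × ℝ => f p.1 p.2) (g₁ a, g₂ a)) (g₁ a, g₂ a) :=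
    ((hf.differentiable one_ne_zero) (g₁ a, g₂ a)).hasFDerivAt
  exact hF.comp_hasDerivAt a (h1.prodMk h2)

lemma apply_eq (A : ℝ × ℝ →L[ℝ] ℝ) (c e : ℝ) :
    A (c, e) = c * A (1, 0) + e * A (0, 1) := by
  have h : (c, e) = c • ((1:ℝ), (0:ℝ)) + e • ((0:ℝ), (1:ℝ)) := by
    simp [Prod.ext_iff]
  rw [h, map_add, map_smul, map_smul, smul_eq_mul, smul_eq_mul]

theorem stmt6
    (m s r h : ℝ → ℝ → ℝ) (v : ℝ → ℝ → ℝ → ℝ) (x w d : ℝ)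
    (hm : ContDiff ℝ 1 fun p : ℝ × ℝ => m p.1 p.2)
    (hscd : ContDiff ℝ 1 fun p : ℝ × ℝ => s p.1 p.2)
    (hrcd : ContDiff ℝ 1 fun p : ℝ × ℝ => r p.1 p.2)
    (hhcd : ContDiff ℝ 1 fun p : ℝ × ℝ => h p.1 p.2)
    (hvcd : ContDiff ℝ 1 fun p : ℝ × ℝ × ℝ => v p.1 p.2.1 p.2.2)
    (hveq : ∀ x' w' d', v x' w' d' = m x' (s (r x' w') d'))
    (hheq : ∀ x' w', x' = h w' (r x' w'))
    (hsr : deriv (fun u => s u d) (r x w) * deriv (fun u => r x u) w ≠ 0)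
    (hme : deriv (fun u => m x u) (s (r x w) d) ≠ 0) :
    deriv (fun u => h u (r x w)) w =
        -(deriv (fun u => r x u) w) / deriv (fun u => r u w) x ∧
      deriv (fun u => m u (s (r x w) d)) x =
        deriv (fun u => v u w d) x +
          deriv (fun u => v x u d) w / deriv (fun u => h u (r x w)) w := by
  set Ar := fderiv ℝ (fun p : ℝ × ℝ => r p.1 p.2) (x, w) with hAr
  set As := fderiv ℝ (fun p : ℝ × ℝ => s p.1 p.2) (r x w, d) with hAs
  set Am := fderiv ℝ (fun p : ℝ × ℝ => m p.1 p.2) (x, s (r x w) d) with hAm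
  set Ah := fderiv ℝ (fun p : ℝ × ℝ => h p.1 p.2) (w, r x w) with hAh
  have hrw : HasDerivAt (fun u => r x u) (Ar (0, 1)) w :=
    comp2 r hrcd (hasDerivAt_const w x) (hasDerivAt_id w)
  have hrx : HasDerivAt (fun u => r u w) (Ar (1, 0)) x :=
    comp2 r hrcd (hasDerivAt_id x) (hasDerivAt_const x w)
  have hsd : HasDerivAt (fun u => s u d) (As (1, 0)) (r x w) :=
    comp2 s hscd (hasDerivAt_id _) (hasDerivAt_const _ d)
  have hmx : HasDerivAt (fun u => m u (s (r x w) d)) (Am (1, 0)) x :=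
    comp2 m hm (hasDerivAt_id x) (hasDerivAt_const x _)
  have hmy : HasDerivAt (fun u => m x u) (Am (0, 1)) (s (r x w) d) :=
    comp2 m hm (hasDerivAt_const _ x) (hasDerivAt_id _)
  have hhw : HasDerivAt (fun u => h u (r x w)) (Ah (1, 0)) w :=
    comp2 h hhcd (hasDerivAt_id w) (hasDerivAt_const w _)
  -- E1 : Ah(1, rw) = 0
  have hE1 : Ah (1, Ar (0, 1)) = 0 := by
    have hc : HasDerivAt (fun u => h u (r x u)) (Ah (1, Ar (0, 1))) w :=
      comp2 h hhcd (hasDerivAt_id w) hrw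
    have heq : (fun u => h u (r x u)) = fun _ => x := funext fun u => (hheq x u).symm
    rw [heq] at hc
    exact hc.unique (hasDerivAt_const w x)
  -- E2 : Ah(0, rx) = 1
  have hE2 : Ah (0, Ar (1, 0)) = 1 := by
    have hc : HasDerivAt (fun u => h w (r u w)) (Ah (0, Ar (1, 0))) x :=
      comp2 h hhcd (hasDerivAt_const x w) hrx
    have heq : (fun u => h w (r u w)) = fun u => u := funext fun u => (hheq u w).symm
    rw [heq] at hc
    exact hc.unique (hasDerivAt_id x)
  -- v partials
  have hsx : HasDerivAt (fun u => s (r u w) d) (As (Ar (1, 0), 0)) x :=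
    comp2 s hscd hrx (hasDerivAt_const x d)
  have hvx : HasDerivAt (fun u => v u w d) (Am (1, As (Ar (1, 0), 0))) x := by
    have hc : HasDerivAt (fun u => m u (s (r u w) d)) (Am (1, As (Ar (1, 0), 0))) x :=
      comp2 m hm (hasDerivAt_id x) hsx
    have heq : (fun u => v u w d) = fun u => m u (s (r u w) d) :=
      funext fun u => hveq u w d
    rw [heq]; exact hc
  have hsw : HasDerivAt (fun u => s (r x u) d) (As (Ar (0, 1), 0)) w :=
    comp2 s hscd hrw (hasDerivAt_const w d)
  have hvw : HasDerivAt (fun u => v x u d) (Am (0, As (Ar (0, 1), 0))) w := by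
    have hc : HasDerivAt (fun u => m x (s (r x u) d)) (Am (0, As (Ar (0, 1), 0))) w :=
      comp2 m hm (hasDerivAt_const w x) hsw
    have heq : (fun u => v x u d) = fun u => m x (s (r x u) d) :=
      funext fun u => hveq x u d
    rw [heq]; exact hc
  -- abbreviations
  set a := Am (1, 0)
  set b := Am (0, 1)
  set se := As (1, 0)
  set rX := Ar (1, 0)
  set rW := Ar (0, 1)
  set hW := Ah (1, 0)
  set he := Ah (0, 1)
  rw [hsd.deriv, hrw.deriv] at hsr
  rw [hmy.deriv] at hme
  have e1 : hW + rW * he = 0 := by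
    have := apply_eq Ah 1 rW; rw [hE1] at this; linarith
  have e2 : rX * he = 1 := by
    have := apply_eq Ah 0 rX; rw [hE2] at this; linarith
  have hrX : rX ≠ 0 := by intro h0; rw [h0, zero_mul] at e2; exact one_ne_zero e2.symm
  have hrW : rW ≠ 0 := fun h0 => hsr (by rw [h0, mul_zero])
  have hse : se ≠ 0 := fun h0 => hsr (by rw [h0, zero_mul])
  have hAsx : As (rX, 0) = rX * se := by
    have := apply_eq As rX 0; simpa using this
  have hAsw : As (rW, 0) = rW * se := by
    have := apply_eq As rW 0; simpa using this
  have hvx' : Am (1, As (rX, 0)) = a + rX * se * b := by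
    rw [hAsx, apply_eq Am 1 (rX * se)]; ring
  have hvw' : Am (0, As (rW, 0)) = rW * se * b := by
    rw [hAsw, apply_eq Am 0 (rW * se)]; ring
  have goal1 : hW = -rW / rX := by
    rw [eq_div_iff hrX]; linear_combination rX * e1 - rW * e2
  refine ⟨by rw [hhw.deriv, hrw.deriv, hrx.deriv]; exact goal1, ?_⟩
  rw [hmx.deriv, hvx.deriv, hvw.deriv, hhw.deriv, hvx', hvw', goal1]
  have hdiv : rW * se * b / (-rW / rX) = -(rX * se * b) := by
    rw [div_div_eq_mul_div, div_neg,
      show rW * se * b * rX = rX * se * b * rW by ring,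
      mul_div_assoc, div_self hrW, mul_one]
  rw [hdiv]; ring
end

section
/- Let W*, ΔW₁, ΔW₂ be real random variables with W₁ = W* + ΔW₁, W₂ = W* + ΔW₂, E[ΔW₁ | W*, ΔW₂] = 0, ΔW₂ independent of W*, E|W₁| < ∞, and E[e^{iξW₂}] ≠ 0. Then E[W₁ e^{iξW₂}] / E[e^{iξW₂}] = E[W* e^{iξW*}] / E[e^{iξW*}] = −i (d/dξ) φ_{W*}(ξ) / φ_{W*}(ξ), where φ_{W*}(ξ) = E[e^{iξW*}]. -/
open MeasureTheory ProbabilityTheory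

private lemma indep_integral_mul' {Ω : Type*} [MeasurableSpace Ω] (P : Measure Ω)
    [IsProbabilityMeasure P] {X Y : Ω → ℝ} (hX : Measurable X) (hY : Measurable Y)
    (h : IndepFun X Y P) (f g : ℝ → ℂ) (hf : Measurable f) (hg : Measurable g) :
    ∫ ω, f (X ω) * g (Y ω) ∂P = (∫ ω, f (X ω) ∂P) * ∫ ω, g (Y ω) ∂P := by
  have hmap := (ProbabilityTheory.indepFun_iff_map_prod_eq_prod_map_map hX.aemeasurable
    hY.aemeasurable).mp h
  have hprob : IsProbabilityMeasure (P.map X) := Measure.isProbabilityMeasure_map hX.aemeasurable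
  have hprob' : IsProbabilityMeasure (P.map Y) := Measure.isProbabilityMeasure_map hY.aemeasurable
  calc ∫ ω, f (X ω) * g (Y ω) ∂P
      = ∫ p : ℝ × ℝ, f p.1 * g p.2 ∂(P.map (fun ω => (X ω, Y ω))) := by
        have hm : Measurable fun p : ℝ × ℝ => f p.1 * g p.2 :=
          (hf.comp measurable_fst).mul (hg.comp measurable_snd)
        rw [integral_map (hX.prodMk hY).aemeasurable hm.aestronglyMeasurable]
    _ = ∫ p : ℝ × ℝ, f p.1 * g p.2 ∂((P.map X).prod (P.map Y)) := by rw [hmap]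
    _ = (∫ x, f x ∂(P.map X)) * ∫ y, g y ∂(P.map Y) := integral_prod_mul f g
    _ = (∫ ω, f (X ω) ∂P) * ∫ ω, g (Y ω) ∂P := by
        rw [integral_map hX.aemeasurable hf.aestronglyMeasurable,
          integral_map hY.aemeasurable hg.aestronglyMeasurable]

private lemma cond_zero {Ω : Type*} [mΩ : MeasurableSpace Ω] (P : Measure Ω)
    [IsProbabilityMeasure P] {Wstar ΔW1 ΔW2 : Ω → ℝ}
    (hWm : Measurable Wstar) (hΔ2m : Measurable ΔW2)
    (hΔ1int : Integrable ΔW1 P)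
    (hcond : P[ΔW1 |
      MeasurableSpace.comap (fun ω => (Wstar ω, ΔW2 ω)) inferInstance] =ᵐ[P] 0)
    (ψ : ℝ × ℝ → ℝ) (hψ : Measurable ψ) (hψb : ∀ p, |ψ p| ≤ 1) :
    ∫ ω, ΔW1 ω * ψ (Wstar ω, ΔW2 ω) ∂P = 0 := by
  set m : MeasurableSpace Ω :=
    MeasurableSpace.comap (fun ω => (Wstar ω, ΔW2 ω)) inferInstance with hm_def
  have hm : m ≤ mΩ := (hWm.prodMk hΔ2m).comap_le
  have hpair : @Measurable Ω (ℝ × ℝ) m _ (fun ω => (Wstar ω, ΔW2 ω)) :=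
    fun s hs => ⟨s, hs, rfl⟩
  set v : Ω → ℝ := fun ω => ψ (Wstar ω, ΔW2 ω) with hv_def
  have hv_sm : StronglyMeasurable[m] v := (hψ.comp hpair).stronglyMeasurable
  have h1 : P[v * ΔW1 | m] =ᵐ[P] v * P[ΔW1 | m] :=
    condExp_stronglyMeasurable_mul_of_bound hm hv_sm hΔ1int 1
      (Filter.Eventually.of_forall fun ω => by
        simpa [Real.norm_eq_abs] using hψb (Wstar ω, ΔW2 ω))
  have h2 : P[v * ΔW1 | m] =ᵐ[P] 0 := by
    refine h1.trans ?_
    filter_upwards [hcond] with ω hω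
    simp [hω]
  have h3 : ∫ ω, (v * ΔW1) ω ∂P = 0 := by
    rw [← integral_condExp hm, integral_congr_ae h2]
    simp
  rw [← h3]
  exact integral_congr_ae (Filter.Eventually.of_forall fun ω => by simp [mul_comm]; exact Or.inl rfl)

private lemma deriv_cf {Ω : Type*} [MeasurableSpace Ω] (P : Measure Ω)
    [IsProbabilityMeasure P] {X : Ω → ℝ} (hXm : Measurable X) (hXint : Integrable X P)
    (ξ : ℝ) :
    HasDerivAt (fun u : ℝ => ∫ ω, Complex.exp (Complex.I * u * (X ω : ℂ)) ∂P)
      (∫ ω, Complex.I * (X ω : ℂ) * Complex.exp (Complex.I * ξ * (X ω : ℂ)) ∂P) ξ := by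
  have hXc : Measurable fun ω => (X ω : ℂ) := Complex.measurable_ofReal.comp hXm
  have hmeas : ∀ u : ℝ, AEStronglyMeasurable
      (fun ω => Complex.exp (Complex.I * u * (X ω : ℂ))) P :=
    fun u => ((measurable_const.mul hXc).cexp).aestronglyMeasurable
  have key := hasDerivAt_integral_of_dominated_loc_of_deriv_le (𝕜 := ℝ) (μ := P)
      (F := fun u ω => Complex.exp (Complex.I * u * (X ω : ℂ)))
      (F' := fun u ω => Complex.I * (X ω : ℂ) * Complex.exp (Complex.I * u * (X ω : ℂ)))
      (x₀ := ξ) (bound := fun ω => |X ω|) (Metric.ball_mem_nhds ξ one_pos)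
      (Filter.Eventually.of_forall hmeas)
      ?_ ?_ ?_ ?_ ?_
  · exact key.2
  · refine Integrable.mono' (integrable_const 1) (hmeas ξ)
      (Filter.Eventually.of_forall fun ω => ?_)
    rw [Complex.norm_exp]
    simp [Complex.mul_re]
  · exact ((measurable_const.mul hXc).mul ((measurable_const.mul hXc).cexp)).aestronglyMeasurable
  · refine Filter.Eventually.of_forall fun ω => fun u _ => ?_
    rw [norm_mul, norm_mul, Complex.norm_exp]
    simp [Complex.mul_re]
  · exact hXint.abs
  · refine Filter.Eventually.of_forall fun ω => fun u _ => ?_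
    have h1 : HasDerivAt (fun z : ℂ => Complex.exp (Complex.I * z * (X ω : ℂ)))
        (Complex.exp (Complex.I * u * (X ω : ℂ)) * (Complex.I * 1 * (X ω : ℂ))) (u : ℂ) :=
      (((hasDerivAt_id (u : ℂ)).const_mul Complex.I).mul_const ((X ω : ℂ))).cexp
    have h2 := h1.comp_ofReal
    convert h2 using 1
    · rfl
    ring

theorem stmt8
    {Ω : Type*} [MeasurableSpace Ω] (P : Measure Ω) [IsProbabilityMeasure P]
    (Wstar ΔW1 ΔW2 W1 W2 : Ω → ℝ)
    (hWm : Measurable Wstar) (hΔ1m : Measurable ΔW1) (hΔ2m : Measurable ΔW2)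
    (hW1 : ∀ ω, W1 ω = Wstar ω + ΔW1 ω)
    (hW2 : ∀ ω, W2 ω = Wstar ω + ΔW2 ω)
    (hΔ1int : Integrable ΔW1 P)
    (hcond : P[ΔW1 |
      MeasurableSpace.comap (fun ω => (Wstar ω, ΔW2 ω)) inferInstance] =ᵐ[P] 0)
    (hindep : IndepFun ΔW2 Wstar P)
    (hW1int : Integrable W1 P)
    (ξ : ℝ)
    (hne : (∫ ω, Complex.exp (Complex.I * (ξ : ℂ) * (W2 ω : ℂ)) ∂P) ≠ 0) :
    (∫ ω, (W1 ω : ℂ) * Complex.exp (Complex.I * (ξ : ℂ) * (W2 ω : ℂ)) ∂P) /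
        (∫ ω, Complex.exp (Complex.I * (ξ : ℂ) * (W2 ω : ℂ)) ∂P) =
      (∫ ω, (Wstar ω : ℂ) * Complex.exp (Complex.I * (ξ : ℂ) * (Wstar ω : ℂ)) ∂P) /
        (∫ ω, Complex.exp (Complex.I * (ξ : ℂ) * (Wstar ω : ℂ)) ∂P) ∧
    (∫ ω, (W1 ω : ℂ) * Complex.exp (Complex.I * (ξ : ℂ) * (W2 ω : ℂ)) ∂P) /
        (∫ ω, Complex.exp (Complex.I * (ξ : ℂ) * (W2 ω : ℂ)) ∂P) =
      -Complex.I *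
          deriv (fun u : ℝ => ∫ ω, Complex.exp (Complex.I * (u : ℂ) * (Wstar ω : ℂ)) ∂P) ξ /
        (∫ ω, Complex.exp (Complex.I * (ξ : ℂ) * (Wstar ω : ℂ)) ∂P) := by
  have hWsint : Integrable Wstar P := by
    have h : Wstar = fun ω => W1 ω - ΔW1 ω := funext fun ω => by rw [hW1]; ring
    rw [h]; exact hW1int.sub hΔ1int
  have hW2m : Measurable W2 := by
    have : W2 = fun ω => Wstar ω + ΔW2 ω := funext hW2
    rw [this]; exact hWm.add hΔ2m
  have hW2c : Measurable fun ω => (W2 ω : ℂ) := Complex.measurable_ofReal.comp hW2m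
  have hWsc : Measurable fun ω => (Wstar ω : ℂ) := Complex.measurable_ofReal.comp hWm
  -- the elementary exponential function and its measurability
  have hfm : Measurable fun x : ℝ => Complex.exp (Complex.I * (ξ : ℂ) * (x : ℂ)) :=
    (measurable_const.mul Complex.measurable_ofReal).cexp
  have hgm : Measurable fun x : ℝ => (x : ℂ) * Complex.exp (Complex.I * (ξ : ℂ) * (x : ℂ)) :=
    Complex.measurable_ofReal.mul hfm
  have hnorm : ∀ w : ℝ, ‖Complex.exp (Complex.I * (ξ : ℂ) * (w : ℂ))‖ = 1 := by
    intro w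
    rw [Complex.norm_exp]
    simp [Complex.mul_re]
  -- splitting of the exponential
  have hsplit : ∀ ω, Complex.exp (Complex.I * (ξ : ℂ) * (W2 ω : ℂ)) =
      Complex.exp (Complex.I * (ξ : ℂ) * (Wstar ω : ℂ)) *
        Complex.exp (Complex.I * (ξ : ℂ) * (ΔW2 ω : ℂ)) := by
    intro ω
    rw [← Complex.exp_add, hW2 ω]
    push_cast
    ring_nf
  set N : ℂ := ∫ ω, (Wstar ω : ℂ) * Complex.exp (Complex.I * (ξ : ℂ) * (Wstar ω : ℂ)) ∂P with hN
  set B : ℂ := ∫ ω, Complex.exp (Complex.I * (ξ : ℂ) * (Wstar ω : ℂ)) ∂P with hB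
  set A : ℂ := ∫ ω, Complex.exp (Complex.I * (ξ : ℂ) * (ΔW2 ω : ℂ)) ∂P with hA
  -- denominator factorization
  have hDen : (∫ ω, Complex.exp (Complex.I * (ξ : ℂ) * (W2 ω : ℂ)) ∂P) = B * A := by
    rw [integral_congr_ae (Filter.Eventually.of_forall hsplit)]
    exact indep_integral_mul' P hWm hΔ2m hindep.symm _ _ hfm hfm
  have hAne : A ≠ 0 := fun h0 => hne (by rw [hDen, h0, mul_zero])
  have hBne : B ≠ 0 := fun h0 => hne (by rw [hDen, h0, zero_mul])
  -- integrability of products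
  have hmulint : ∀ (Z : Ω → ℝ) (Y : Ω → ℝ), Integrable Z P → Measurable Z → Measurable Y →
      Integrable (fun ω => (Z ω : ℂ) * Complex.exp (Complex.I * (ξ : ℂ) * (Y ω : ℂ))) P := by
    intro Z Y hZint hZm hYm
    refine Integrable.mono' hZint.abs
      ((Complex.measurable_ofReal.comp hZm).mul
        ((measurable_const.mul (Complex.measurable_ofReal.comp hYm)).cexp)).aestronglyMeasurable
      (Filter.Eventually.of_forall fun ω => ?_)
    rw [norm_mul, hnorm]
    simp
  -- the ΔW1 term vanishes
  have hzero : ∫ ω, (ΔW1 ω : ℂ) * Complex.exp (Complex.I * (ξ : ℂ) * (W2 ω : ℂ)) ∂P = 0 := by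
    have hint := hmulint ΔW1 W2 hΔ1int hΔ1m hW2m
    have hψm : Measurable fun p : ℝ × ℝ =>
        Complex.exp (Complex.I * (ξ : ℂ) * ((p.1 : ℂ) + (p.2 : ℂ))) := by
      exact (measurable_const.mul ((Complex.measurable_ofReal.comp measurable_fst).add
        (Complex.measurable_ofReal.comp measurable_snd))).cexp
    have hψabs : ∀ p : ℝ × ℝ,
        ‖Complex.exp (Complex.I * (ξ : ℂ) * ((p.1 : ℂ) + (p.2 : ℂ)))‖ = 1 := by
      intro p
      rw [Complex.norm_exp]
      simp [Complex.mul_re, Complex.add_re, Complex.add_im]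
    have hre : ∫ ω, ΔW1 ω *
        (Complex.exp (Complex.I * (ξ : ℂ) * ((Wstar ω : ℂ) + (ΔW2 ω : ℂ)))).re ∂P = 0 :=
      cond_zero P hWm hΔ2m hΔ1int hcond _ (Complex.measurable_re.comp hψm)
        (fun p => (Complex.abs_re_le_norm _).trans (le_of_eq (hψabs p)))
    have him : ∫ ω, ΔW1 ω *
        (Complex.exp (Complex.I * (ξ : ℂ) * ((Wstar ω : ℂ) + (ΔW2 ω : ℂ)))).im ∂P = 0 :=
      cond_zero P hWm hΔ2m hΔ1int hcond _ (Complex.measurable_im.comp hψm)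
        (fun p => (Complex.abs_im_le_norm _).trans (le_of_eq (hψabs p)))
    have hcast : ∀ ω, Complex.exp (Complex.I * (ξ : ℂ) * (W2 ω : ℂ)) =
        Complex.exp (Complex.I * (ξ : ℂ) * ((Wstar ω : ℂ) + (ΔW2 ω : ℂ))) := by
      intro ω; rw [hW2 ω]; push_cast; ring_nf
    rw [← integral_re_add_im hint]
    have h1 : ∫ ω, RCLike.re ((ΔW1 ω : ℂ) *
        Complex.exp (Complex.I * (ξ : ℂ) * (W2 ω : ℂ))) ∂P = 0 := by
      rw [← hre]
      refine integral_congr_ae (Filter.Eventually.of_forall fun ω => ?_)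
      simp only [hcast ω, RCLike.re_to_complex, Complex.re_ofReal_mul]
    have h2 : ∫ ω, RCLike.im ((ΔW1 ω : ℂ) *
        Complex.exp (Complex.I * (ξ : ℂ) * (W2 ω : ℂ))) ∂P = 0 := by
      rw [← him]
      refine integral_congr_ae (Filter.Eventually.of_forall fun ω => ?_)
      simp only [hcast ω, RCLike.im_to_complex, Complex.im_ofReal_mul]
    rw [h1, h2]
    simp
  -- numerator factorization
  have hNumW : ∫ ω, (Wstar ω : ℂ) * Complex.exp (Complex.I * (ξ : ℂ) * (W2 ω : ℂ)) ∂P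
      = N * A := by
    have : ∀ ω, (Wstar ω : ℂ) * Complex.exp (Complex.I * (ξ : ℂ) * (W2 ω : ℂ)) =
        ((Wstar ω : ℂ) * Complex.exp (Complex.I * (ξ : ℂ) * (Wstar ω : ℂ))) *
          Complex.exp (Complex.I * (ξ : ℂ) * (ΔW2 ω : ℂ)) := by
      intro ω; rw [hsplit ω]; ring
    rw [integral_congr_ae (Filter.Eventually.of_forall this)]
    exact indep_integral_mul' P hWm hΔ2m hindep.symm _ _ hgm hfm
  have hNum : ∫ ω, (W1 ω : ℂ) * Complex.exp (Complex.I * (ξ : ℂ) * (W2 ω : ℂ)) ∂P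
      = N * A := by
    have hsum : ∀ ω, (W1 ω : ℂ) * Complex.exp (Complex.I * (ξ : ℂ) * (W2 ω : ℂ)) =
        (Wstar ω : ℂ) * Complex.exp (Complex.I * (ξ : ℂ) * (W2 ω : ℂ)) +
          (ΔW1 ω : ℂ) * Complex.exp (Complex.I * (ξ : ℂ) * (W2 ω : ℂ)) := by
      intro ω; rw [hW1 ω]; push_cast; ring
    rw [integral_congr_ae (Filter.Eventually.of_forall hsum),
      integral_add (hmulint Wstar W2 hWsint hWm hW2m) (hmulint ΔW1 W2 hΔ1int hΔ1m hW2m),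
      hzero, hNumW, add_zero]
  have hfrac : (∫ ω, (W1 ω : ℂ) * Complex.exp (Complex.I * (ξ : ℂ) * (W2 ω : ℂ)) ∂P) /
      (∫ ω, Complex.exp (Complex.I * (ξ : ℂ) * (W2 ω : ℂ)) ∂P) = N / B := by
    rw [hNum, hDen, mul_div_mul_right _ _ hAne]
  refine ⟨hfrac, ?_⟩
  have hd : deriv (fun u : ℝ => ∫ ω, Complex.exp (Complex.I * (u : ℂ) * (Wstar ω : ℂ)) ∂P) ξ
      = Complex.I * N := by
    rw [(deriv_cf P hWm hWsint ξ).deriv]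
    rw [hN, ← integral_const_mul]
    refine integral_congr_ae (Filter.Eventually.of_forall fun ω => ?_)
    ring
  rw [hfrac, hd]
  rw [neg_mul, ← mul_assoc, Complex.I_mul_I]
  ring
end
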